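/- Define f : ℕ → ℕ by f(n) = ∑_{k=0}^{n} C(4k, k)·C(3k, k)·128^{n-k}, where C(·,·) is the usual binomial coefficient. Then f(n)/128^n → √π / (Γ(5/8)·Γ(7/8)) as n → ∞; that is, f(n) ∼ (√π / (Γ(5/8)·Γ(7/8)))·128^n. -/

import Mathlib

open MeasureTheory Set Real Filter

noncomputable def Bint (a b : ℝ) : ℝ := ∫ t in Ioo (0:ℝ) 1, t ^ (a-1) * (1-t) ^ (b-1)

lemma beta_ofReal {a b x : ℝ} (hx0 : 0 ≤ x) (hx1 : x ≤ 1) :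
    ((x ^ (a-1) * (1-x) ^ (b-1) : ℝ) : ℂ) = (x:ℂ) ^ ((a:ℂ)-1) * (1-(x:ℂ)) ^ ((b:ℂ)-1) := by
  rw [show (1 - (x:ℂ)) = (((1-x : ℝ)):ℂ) by push_cast; ring,
    show ((a:ℂ)-1) = ((a-1 : ℝ) : ℂ) by push_cast; ring,
    show ((b:ℂ)-1) = ((b-1 : ℝ) : ℂ) by push_cast; ring,
    ← Complex.ofReal_cpow hx0, ← Complex.ofReal_cpow (by linarith)]
  push_cast; ring

lemma beta_integrable {a b : ℝ} (ha : 0 < a) (hb : 0 < b) :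
    IntegrableOn (fun t : ℝ => t ^ (a-1) * (1-t) ^ (b-1)) (Ioo (0:ℝ) 1) := by
  have h := (Complex.betaIntegral_convergent (u := (a:ℂ)) (v := (b:ℂ)) (by simpa) (by simpa))
  rw [intervalIntegrable_iff_integrableOn_Ioc_of_le zero_le_one] at h
  have h2 : IntegrableOn (fun x : ℝ => ‖(x:ℂ) ^ ((a:ℂ)-1) * (1-(x:ℂ)) ^ ((b:ℂ)-1)‖)
      (Ioo (0:ℝ) 1) := MeasureTheory.IntegrableOn.mono_set h.norm Ioo_subset_Ioc_self
  refine h2.congr_fun (fun x hx => ?_) measurableSet_Ioo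
  have h1 : (0:ℝ) ≤ x ^ (a-1) * (1-x) ^ (b-1) :=
    mul_nonneg (Real.rpow_nonneg hx.1.le _) (Real.rpow_nonneg (by linarith [hx.2]) _)
  dsimp only
  rw [← beta_ofReal hx.1.le hx.2.le, Complex.norm_real, Real.norm_of_nonneg h1]

lemma beta_eq {a b : ℝ} (ha : 0 < a) (hb : 0 < b) :
    Bint a b = Real.Gamma a * Real.Gamma b / Real.Gamma (a+b) := by
  have h := Complex.Gamma_mul_Gamma_eq_betaIntegral (s := (a:ℂ)) (t := (b:ℂ)) (by simpa) (by simpa)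
  have hB : Complex.betaIntegral (a:ℂ) (b:ℂ) = (Bint a b : ℂ) := by
    rw [Complex.betaIntegral,
      show (Bint a b : ℂ) = ∫ t in (0:ℝ)..1, ((t ^ (a-1) * (1-t) ^ (b-1) : ℝ) : ℂ) by
        rw [intervalIntegral.integral_ofReal, Bint, intervalIntegral.integral_of_le zero_le_one,
          integral_Ioc_eq_integral_Ioo]]
    refine intervalIntegral.integral_congr (fun x hx => ?_)
    rw [uIcc_of_le zero_le_one] at hx
    exact (beta_ofReal hx.1 hx.2).symm
  rw [hB, ← Complex.ofReal_add, Complex.Gamma_ofReal, Complex.Gamma_ofReal,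
    Complex.Gamma_ofReal, ← Complex.ofReal_mul, ← Complex.ofReal_mul] at h
  have hab : Real.Gamma (a+b) ≠ 0 := (Real.Gamma_pos_of_pos (by linarith)).ne'
  have := Complex.ofReal_inj.mp h
  field_simp
  linarith [this]

lemma fact_gamma (k : ℕ) : ((4*k).factorial : ℝ) * Real.Gamma (1/4) * Real.Gamma (3/4)
    = 64^k * ((2*k).factorial : ℝ) * Real.Gamma (k+1/4) * Real.Gamma (k+3/4) := by
  induction k with
  | zero => norm_num
  | succ n ih =>
    have hn : (0:ℝ) ≤ n := Nat.cast_nonneg n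
    have g1 : Real.Gamma (((n+1:ℕ):ℝ)+1/4) = (n+1/4) * Real.Gamma (n+1/4) := by
      rw [show ((n+1:ℕ):ℝ)+1/4 = ((n:ℝ)+1/4)+1 by push_cast; ring,
        Real.Gamma_add_one (by positivity)]
    have g2 : Real.Gamma (((n+1:ℕ):ℝ)+3/4) = (n+3/4) * Real.Gamma (n+3/4) := by
      rw [show ((n+1:ℕ):ℝ)+3/4 = ((n:ℝ)+3/4)+1 by push_cast; ring,
        Real.Gamma_add_one (by positivity)]
    have e1 : ((4*(n+1)).factorial : ℝ)
        = (4*n+4)*(4*n+3)*(4*n+2)*(4*n+1)*((4*n).factorial) := by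
      rw [show 4*(n+1) = (4*n+3)+1 by ring, Nat.factorial_succ,
        show 4*n+3 = (4*n+2)+1 by ring, Nat.factorial_succ,
        show 4*n+2 = (4*n+1)+1 by ring, Nat.factorial_succ,
        show 4*n+1 = (4*n)+1 by ring, Nat.factorial_succ]
      push_cast; ring
    have e2 : ((2*(n+1)).factorial : ℝ) = (2*n+2)*(2*n+1)*((2*n).factorial) := by
      rw [show 2*(n+1) = (2*n+1)+1 by ring, Nat.factorial_succ,
        show 2*n+1 = (2*n)+1 by ring, Nat.factorial_succ]
      push_cast; ring
    rw [e1, e2, g1, g2, pow_succ]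
    push_cast
    linear_combination ((4*(n:ℝ)+4)*(4*(n:ℝ)+3)*(4*(n:ℝ)+2)*(4*(n:ℝ)+1)) * ih

noncomputable def C0 : ℝ := Real.Gamma (1/4) * Real.Gamma (3/4)

lemma C0_pos : 0 < C0 :=
  mul_pos (Real.Gamma_pos_of_pos (by norm_num)) (Real.Gamma_pos_of_pos (by norm_num))

noncomputable def gk (k : ℕ) : ℝ :=
  ((Nat.choose (4*k) k * Nat.choose (3*k) k : ℕ) : ℝ) / 128^k

lemma gk_eq (k : ℕ) :
    gk k = Bint (k+1/4) (3/4) * (Bint (k+3/4) (1/4) * (1/2)^k) / C0^2 := by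
  have hB1 : Bint (k+1/4) (3/4) = Real.Gamma (k+1/4) * Real.Gamma (3/4) / (k.factorial : ℝ) := by
    rw [beta_eq (by positivity) (by norm_num),
      show ((k:ℝ)+1/4)+3/4 = ((k:ℕ):ℝ)+1 by push_cast; ring, Real.Gamma_nat_eq_factorial]
  have hB2 : Bint (k+3/4) (1/4) = Real.Gamma (k+3/4) * Real.Gamma (1/4) / (k.factorial : ℝ) := by
    rw [beta_eq (by positivity) (by norm_num),
      show ((k:ℝ)+3/4)+1/4 = ((k:ℕ):ℝ)+1 by push_cast; ring, Real.Gamma_nat_eq_factorial]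
  have hnat : (Nat.choose (4*k) k * Nat.choose (3*k) k) * (k.factorial * k.factorial
      * (2*k).factorial) = (4*k).factorial := by
    have h1 := Nat.choose_mul_factorial_mul_factorial (show k ≤ 4*k by omega)
    have h2 := Nat.choose_mul_factorial_mul_factorial (show k ≤ 3*k by omega)
    rw [show 4*k-k = 3*k by omega] at h1
    rw [show 3*k-k = 2*k by omega] at h2
    calc (Nat.choose (4*k) k * Nat.choose (3*k) k) * (k.factorial * k.factorial
        * (2*k).factorial)
        = (Nat.choose (4*k) k) * k.factorial * ((Nat.choose (3*k) k) * k.factorial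
          * (2*k).factorial) := by ring
      _ = (4*k).factorial := by rw [h2, h1]
  have hnatR : ((Nat.choose (4*k) k * Nat.choose (3*k) k : ℕ) : ℝ)
      * ((k.factorial : ℝ) * k.factorial * (2*k).factorial) = ((4*k).factorial : ℝ) := by
    rw [← hnat]; push_cast; ring
  have hfg := fact_gamma k
  have hkf : (0:ℝ) < k.factorial := by positivity
  have h2kf : (0:ℝ) < (2*k).factorial := by positivity
  have hGa := Real.Gamma_pos_of_pos (show (0:ℝ) < k+1/4 by positivity)
  have hGb := Real.Gamma_pos_of_pos (show (0:ℝ) < k+3/4 by positivity)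
  have hG1 := Real.Gamma_pos_of_pos (show (0:ℝ) < 1/4 by norm_num)
  have hG3 := Real.Gamma_pos_of_pos (show (0:ℝ) < 3/4 by norm_num)
  rw [gk, hB1, hB2, C0]
  set Ga := Real.Gamma ((k:ℝ)+1/4)
  set Gb := Real.Gamma ((k:ℝ)+3/4)
  set G1 := Real.Gamma (1/4:ℝ)
  set G3 := Real.Gamma (3/4:ℝ)
  set N := ((Nat.choose (4*k) k * Nat.choose (3*k) k : ℕ) : ℝ) with hNdef
  have hN : N * (((k.factorial:ℝ))^2*(G1*G3)) * ((2*k).factorial:ℝ)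
      = 64^k*Ga*Gb*((2*k).factorial:ℝ) := by
    linear_combination (G1*G3)*hnatR + hfg
  have hN2 : N = 64^k*Ga*Gb/(((k.factorial:ℝ))^2*(G1*G3)) := by
    rw [eq_div_iff (by positivity)]
    exact mul_right_cancel₀ h2kf.ne' hN
  rw [hN2, show (128:ℝ)^k = 64^k*2^k by rw [← mul_pow]; norm_num]
  field_simp
  ring
  rw [← mul_pow]; norm_num

lemma Bint_nonneg (a b : ℝ) : 0 ≤ Bint a b := by
  refine setIntegral_nonneg measurableSet_Ioo (fun t ht => ?_)
  exact mul_nonneg (Real.rpow_nonneg ht.1.le _) (Real.rpow_nonneg (by linarith [ht.2]) _)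

lemma Bint_mono {a a' b : ℝ} (ha : 0 < a) (hb : 0 < b) (h : a ≤ a') :
    Bint a' b ≤ Bint a b := by
  refine setIntegral_mono_on (beta_integrable (by linarith) hb)
    (beta_integrable ha hb) measurableSet_Ioo (fun t ht => ?_)
  refine mul_le_mul_of_nonneg_right ?_ (Real.rpow_nonneg (by linarith [ht.2]) _)
  exact Real.rpow_le_rpow_of_exponent_ge ht.1 ht.2.le (by linarith)

lemma mobius {x : ℝ} (hx0 : 0 ≤ x) (hx1 : x < 1) :
    ∫ s in Ioo (0:ℝ) 1, s^((3:ℝ)/4-1) * (1-s)^((1:ℝ)/4-1) * (1-x*s)⁻¹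
      = (1-x)^(-(3/4):ℝ) * Bint (1/4) (3/4) := by
  have h1x : (0:ℝ) < 1-x := by linarith
  set φ : ℝ → ℝ := fun u => (1-u)/(1-u*x) with hφ
  have hD : ∀ u : ℝ, 0 ≤ u → u ≤ 1 → 0 < 1-u*x := by
    intro u hu0 hu1
    nlinarith
  have hmem : ∀ u ∈ Ioo (0:ℝ) 1, φ u ∈ Ioo (0:ℝ) 1 := by
    intro u hu
    have hDu := hD u hu.1.le hu.2.le
    constructor
    · exact div_pos (by linarith [hu.2]) hDu
    · rw [div_lt_one hDu]
      nlinarith [hu.1, hu.2]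
  have hinv : ∀ u ∈ Ioo (0:ℝ) 1, φ (φ u) = u := by
    intro u hu
    have hDu := hD u hu.1.le hu.2.le
    rw [hφ]
    simp only
    have hsub1 : 1-(1-u)/(1-u*x) = u*(1-x)/(1-u*x) := by
      rw [eq_div_iff hDu.ne', sub_mul, div_mul_cancel₀ _ hDu.ne']; ring
    have hsub2 : 1-(1-u)/(1-u*x)*x = (1-x)/(1-u*x) := by
      rw [eq_div_iff hDu.ne', sub_mul, div_mul_eq_mul_div, div_mul_cancel₀ _ hDu.ne']; ring
    rw [hsub1, hsub2, mul_div_assoc]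
    exact mul_div_cancel_right₀ u (div_pos h1x hDu).ne'
  have himg : φ '' (Ioo (0:ℝ) 1) = Ioo (0:ℝ) 1 := by
    apply Subset.antisymm
    · rintro v ⟨u, hu, rfl⟩; exact hmem u hu
    · intro v hv
      exact ⟨φ v, hmem v hv, hinv v hv⟩
  have hinj : InjOn φ (Ioo (0:ℝ) 1) := by
    intro a ha b hb h
    rw [← hinv a ha, ← hinv b hb, h]
  have hder : ∀ u ∈ Ioo (0:ℝ) 1,
      HasDerivWithinAt φ ((x-1)/(1-u*x)^2) (Ioo (0:ℝ) 1) u := by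
    intro u hu
    have hDu := hD u hu.1.le hu.2.le
    have h1 : HasDerivAt (fun u : ℝ => 1-u) (-1) u := by
      simpa using (hasDerivAt_id u).const_sub 1
    have h2 : HasDerivAt (fun u : ℝ => 1-u*x) (-x) u := by
      simpa using ((hasDerivAt_id u).mul_const x).const_sub 1
    have h3 := h1.div h2 hDu.ne'
    have : (-1*(1-u*x) - (1-u)*(-x))/(1-u*x)^2 = (x-1)/(1-u*x)^2 := by ring
    rw [this] at h3
    exact h3.hasDerivWithinAt
  have key := integral_image_eq_integral_abs_deriv_smul measurableSet_Ioo hder hinj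
    (fun s => s^((3:ℝ)/4-1) * (1-s)^((1:ℝ)/4-1) * (1-x*s)⁻¹)
  rw [himg] at key
  rw [key]
  have hpt : ∀ u ∈ Ioo (0:ℝ) 1,
      |(x-1)/(1-u*x)^2| • (φ u^((3:ℝ)/4-1) * (1-φ u)^((1:ℝ)/4-1) * (1-x*φ u)⁻¹)
        = (1-x)^(-(3/4):ℝ) * (u^((1:ℝ)/4-1) * (1-u)^((3:ℝ)/4-1)) := by
    intro u hu
    obtain ⟨hu0, hu1⟩ := hu
    have hDu := hD u hu0.le hu1.le
    have hu1' : (0:ℝ) < 1-u := by linarith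
    have hA : 1 - φ u = u*(1-x)/(1-u*x) := by
      rw [hφ]; simp only
      rw [eq_div_iff hDu.ne', sub_mul, div_mul_cancel₀ _ hDu.ne']; ring
    have hB : 1 - x*φ u = (1-x)/(1-u*x) := by
      rw [hφ]; simp only
      rw [eq_div_iff hDu.ne', sub_mul, ← mul_div_assoc, div_mul_cancel₀ _ hDu.ne']; ring
    have habs : |(x-1)/(1-u*x)^2| = (1-x)/(1-u*x)^2 := by
      rw [abs_div, abs_of_neg (show x-1 < 0 by linarith),
        abs_of_pos (pow_pos hDu 2)]
      ring
    rw [habs, smul_eq_mul, hA, hB, hφ]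
    simp only
    rw [Real.div_rpow hu1'.le hDu.le, Real.div_rpow (by positivity) hDu.le,
      Real.mul_rpow hu0.le h1x.le, inv_div,
      show (-(3/4):ℝ) = 1/4-1 by norm_num]
    have hDD : (1-u*x)^((3:ℝ)/4-1) * ((1-u*x)^((1:ℝ)/4-1)) * (1-u*x) = 1 := by
      rw [show (1-u*x)^((3:ℝ)/4-1) * ((1-u*x)^((1:ℝ)/4-1)) * (1-u*x)
          = (1-u*x)^((((3:ℝ)/4-1) + (1/4-1)) + 1) by
        rw [Real.rpow_add hDu, Real.rpow_add hDu, Real.rpow_one],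
        show ((((3:ℝ)/4-1) + (1/4-1)) + 1) = -1 + 1 by norm_num]
      norm_num
    have hDa := Real.rpow_pos_of_pos hDu ((3:ℝ)/4-1)
    have hDb := Real.rpow_pos_of_pos hDu ((1:ℝ)/4-1)
    have hAp := Real.rpow_pos_of_pos hu1' ((3:ℝ)/4-1)
    have hBp := Real.rpow_pos_of_pos hu0 ((1:ℝ)/4-1)
    have hCp := Real.rpow_pos_of_pos h1x ((1:ℝ)/4-1)
    set Da := (1-u*x)^((3:ℝ)/4-1)
    set Db := (1-u*x)^((1:ℝ)/4-1)
    set A := (1-u)^((3:ℝ)/4-1)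
    set B := u^((1:ℝ)/4-1)
    set C := (1-x)^((1:ℝ)/4-1)
    have hne : 1 - x*u ≠ 0 := by rw [mul_comm]; exact hDu.ne'
    field_simp
    linear_combination -hDD
  rw [setIntegral_congr_fun measurableSet_Ioo hpt, integral_const_mul]
  rfl

lemma beta_contOn (c d : ℝ) : ContinuousOn (fun s : ℝ => s^c * (1-s)^d) (Ioo (0:ℝ) 1) := by
  apply ContinuousOn.mul
  · exact fun s hs => (Real.continuousAt_rpow_const s c (Or.inl hs.1.ne')).continuousWithinAt
  · refine ContinuousOn.comp (t := Ioi (0:ℝ))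
      (fun y hy => (Real.continuousAt_rpow_const y d (Or.inl (ne_of_gt hy))).continuousWithinAt)
      (continuous_const.sub continuous_id).continuousOn ?_
    intro s hs
    simp only [mem_Ioi]
    linarith [hs.2]

lemma lint_eq {g : ℝ → ℝ} (hg : IntegrableOn g (Ioo (0:ℝ) 1))
    (h0 : ∀ s ∈ Ioo (0:ℝ) 1, 0 ≤ g s) :
    ∫⁻ s in Ioo (0:ℝ) 1, ‖g s‖₊ = ENNReal.ofReal (∫ s in Ioo (0:ℝ) 1, g s) := by
  rw [MeasureTheory.ofReal_integral_eq_lintegral_ofReal hg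
    ((ae_restrict_iff' measurableSet_Ioo).2 (ae_of_all _ h0))]
  refine lintegral_congr_ae ?_
  filter_upwards [ae_restrict_mem measurableSet_Ioo] with s hs
  exact Real.enorm_eq_ofReal (h0 s hs)

lemma Bint_b_le (k : ℕ) : Bint (k+3/4) (1/4) ≤ Bint (3/4) (1/4) := by
  have h : (0:ℝ) ≤ (k:ℝ) := Nat.cast_nonneg k
  exact Bint_mono (by norm_num) (by norm_num) (by linarith)

lemma summable_Bb {x : ℝ} (hx0 : 0 ≤ x) (hx1 : x < 1) :
    Summable (fun k : ℕ => Bint (k+3/4) (1/4) * x^k) := by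
  refine Summable.of_nonneg_of_le (fun k => ?_) (fun k => ?_)
    ((summable_geometric_of_lt_one hx0 hx1).mul_left (Bint (3/4) (1/4)))
  · exact mul_nonneg (Bint_nonneg _ _) (by positivity)
  · exact mul_le_mul_of_nonneg_right (Bint_b_le k) (by positivity)

lemma stepI {x : ℝ} (hx0 : 0 ≤ x) (hx1 : x < 1) :
    ∑' k : ℕ, Bint (k+3/4) (1/4) * x^k = (1-x)^(-(3/4):ℝ) * Bint (1/4) (3/4) := by
  set f : ℕ → ℝ → ℝ := fun k s => s^((k:ℝ)+3/4-1) * (1-s)^((1:ℝ)/4-1) * x^k with hf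
  have hint : ∀ k : ℕ, IntegrableOn (f k) (Ioo (0:ℝ) 1) := by
    intro k
    exact (beta_integrable (show (0:ℝ) < (k:ℝ)+3/4 by positivity) (by norm_num)).mul_const _
  have h0 : ∀ k : ℕ, ∀ s ∈ Ioo (0:ℝ) 1, 0 ≤ f k s := by
    intro k s hs
    exact mul_nonneg (mul_nonneg (Real.rpow_nonneg hs.1.le _)
      (Real.rpow_nonneg (by linarith [hs.2]) _)) (by positivity)
  have hval : ∀ k : ℕ, ∫ s in Ioo (0:ℝ) 1, f k s = Bint (k+3/4) (1/4) * x^k := by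
    intro k
    rw [hf]
    simp only
    rw [MeasureTheory.integral_mul_const, Bint]
  have hmeas : ∀ k : ℕ, AEStronglyMeasurable (f k) (volume.restrict (Ioo (0:ℝ) 1)) := by
    intro k
    exact (((beta_contOn _ _).mul continuousOn_const)).aestronglyMeasurable measurableSet_Ioo
  have hlint : ∑' k : ℕ, ∫⁻ s in Ioo (0:ℝ) 1, ‖f k s‖₊ ≠ ⊤ := by
    have : ∀ k : ℕ, ∫⁻ s in Ioo (0:ℝ) 1, ‖f k s‖₊
        = ENNReal.ofReal (Bint (k+3/4) (1/4) * x^k) := by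
      intro k
      rw [lint_eq (hint k) (h0 k), hval k]
    rw [tsum_congr this, ← ENNReal.ofReal_tsum_of_nonneg
      (fun k => mul_nonneg (Bint_nonneg _ _) (by positivity)) (summable_Bb hx0 hx1)]
    exact ENNReal.ofReal_ne_top
  have hswap := MeasureTheory.integral_tsum hmeas hlint
  have hpt : ∀ s ∈ Ioo (0:ℝ) 1, ∑' k : ℕ, f k s
      = s^((3:ℝ)/4-1) * (1-s)^((1:ℝ)/4-1) * (1-x*s)⁻¹ := by
    intro s hs
    have hxs0 : 0 ≤ x*s := mul_nonneg hx0 hs.1.le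
    have hxs1 : x*s < 1 := by nlinarith [hs.1, hs.2]
    have hterm : ∀ k : ℕ, f k s
        = s^((3:ℝ)/4-1) * (1-s)^((1:ℝ)/4-1) * (x*s)^k := by
      intro k
      rw [hf]
      simp only
      rw [show ((k:ℝ)+3/4-1) = ((3:ℝ)/4-1) + k by ring, Real.rpow_add hs.1,
        Real.rpow_natCast, mul_pow]
      ring
    rw [tsum_congr hterm, tsum_mul_left, tsum_geometric_of_lt_one hxs0 hxs1]
  calc ∑' k : ℕ, Bint (k+3/4) (1/4) * x^k
      = ∑' k : ℕ, ∫ s in Ioo (0:ℝ) 1, f k s := by rw [tsum_congr hval]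
    _ = ∫ s in Ioo (0:ℝ) 1, ∑' k : ℕ, f k s := hswap.symm
    _ = ∫ s in Ioo (0:ℝ) 1, s^((3:ℝ)/4-1) * (1-s)^((1:ℝ)/4-1) * (1-x*s)⁻¹ :=
        setIntegral_congr_fun measurableSet_Ioo hpt
    _ = (1-x)^(-(3/4):ℝ) * Bint (1/4) (3/4) := mobius hx0 hx1

lemma Bint_a_le (k : ℕ) : Bint (k+1/4) (3/4) ≤ Bint (1/4) (3/4) := by
  have h : (0:ℝ) ≤ (k:ℝ) := Nat.cast_nonneg k
  exact Bint_mono (by norm_num) (by norm_num) (by linarith)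

lemma summable_prod : Summable (fun k : ℕ =>
    Bint (k+1/4) (3/4) * (Bint (k+3/4) (1/4) * (1/2:ℝ)^k)) := by
  refine Summable.of_nonneg_of_le (fun k => ?_) (fun k => ?_)
    ((summable_geometric_of_lt_one (by norm_num) (by norm_num : (1/2:ℝ) < 1)).mul_left
      (Bint (1/4) (3/4) * Bint (3/4) (1/4)))
  · exact mul_nonneg (Bint_nonneg _ _) (mul_nonneg (Bint_nonneg _ _) (by positivity))
  · have h1 := Bint_a_le k
    have h2 := Bint_b_le k
    have h3 := Bint_nonneg (k+1/4) (3/4)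
    have h4 := Bint_nonneg (k+3/4) (1/4)
    have h5 : (0:ℝ) ≤ (1/2:ℝ)^k := by positivity
    calc Bint (k+1/4) (3/4) * (Bint (k+3/4) (1/4) * (1/2:ℝ)^k)
        ≤ Bint (1/4) (3/4) * (Bint (3/4) (1/4) * (1/2:ℝ)^k) := by
          apply mul_le_mul h1 (mul_le_mul h2 le_rfl h5 (Bint_nonneg _ _))
            (mul_nonneg h4 h5) (Bint_nonneg _ _)
      _ = Bint (1/4) (3/4) * Bint (3/4) (1/4) * (1/2:ℝ)^k := by ring

lemma stepII : ∑' k : ℕ, (Bint (k+1/4) (3/4) * (Bint (k+3/4) (1/4) * (1/2:ℝ)^k))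
    = Bint (1/4) (3/4)
      * ∫ t in Ioo (0:ℝ) 1, t^((1:ℝ)/4-1) * (1-t)^((3:ℝ)/4-1) * (1-t/2)^(-(3/4):ℝ) := by
  set f : ℕ → ℝ → ℝ := fun k t => t^((k:ℝ)+1/4-1) * (1-t)^((3:ℝ)/4-1)
    * (Bint (k+3/4) (1/4) * (1/2:ℝ)^k) with hf
  have hint : ∀ k : ℕ, IntegrableOn (f k) (Ioo (0:ℝ) 1) := by
    intro k
    exact (beta_integrable (show (0:ℝ) < (k:ℝ)+1/4 by positivity) (by norm_num)).mul_const _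
  have h0 : ∀ k : ℕ, ∀ t ∈ Ioo (0:ℝ) 1, 0 ≤ f k t := by
    intro k t ht
    exact mul_nonneg (mul_nonneg (Real.rpow_nonneg ht.1.le _)
      (Real.rpow_nonneg (by linarith [ht.2]) _))
      (mul_nonneg (Bint_nonneg _ _) (by positivity))
  have hval : ∀ k : ℕ, ∫ t in Ioo (0:ℝ) 1, f k t
      = Bint (k+1/4) (3/4) * (Bint (k+3/4) (1/4) * (1/2:ℝ)^k) := by
    intro k
    rw [hf]
    simp only
    rw [MeasureTheory.integral_mul_const]
    simp only [Bint]
  have hmeas : ∀ k : ℕ, AEStronglyMeasurable (f k) (volume.restrict (Ioo (0:ℝ) 1)) := by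
    intro k
    exact (((beta_contOn _ _).mul continuousOn_const)).aestronglyMeasurable measurableSet_Ioo
  have hlint : ∑' k : ℕ, ∫⁻ t in Ioo (0:ℝ) 1, ‖f k t‖₊ ≠ ⊤ := by
    have heq : ∀ k : ℕ, ∫⁻ t in Ioo (0:ℝ) 1, ‖f k t‖₊
        = ENNReal.ofReal (Bint (k+1/4) (3/4) * (Bint (k+3/4) (1/4) * (1/2:ℝ)^k)) := by
      intro k
      rw [lint_eq (hint k) (h0 k), hval k]
    rw [tsum_congr heq, ← ENNReal.ofReal_tsum_of_nonneg
      (fun k => mul_nonneg (Bint_nonneg _ _) (mul_nonneg (Bint_nonneg _ _) (by positivity)))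
      summable_prod]
    exact ENNReal.ofReal_ne_top
  have hswap := MeasureTheory.integral_tsum hmeas hlint
  have hpt : ∀ t ∈ Ioo (0:ℝ) 1, ∑' k : ℕ, f k t
      = Bint (1/4) (3/4) * (t^((1:ℝ)/4-1) * (1-t)^((3:ℝ)/4-1) * (1-t/2)^(-(3/4):ℝ)) := by
    intro t ht
    have ht2 : 0 ≤ t/2 := by linarith [ht.1]
    have ht2' : t/2 < 1 := by linarith [ht.2]
    have hterm : ∀ k : ℕ, f k t
        = (t^((1:ℝ)/4-1) * (1-t)^((3:ℝ)/4-1)) * (Bint (k+3/4) (1/4) * (t/2)^k) := by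
      intro k
      rw [hf]
      simp only
      have h2 : (t/2:ℝ)^k = t^k * (1/2:ℝ)^k := by
        rw [div_pow, div_pow, one_pow, mul_one_div]
      rw [show ((k:ℝ)+1/4-1) = ((1:ℝ)/4-1) + k by ring, Real.rpow_add ht.1,
        Real.rpow_natCast, h2]
      ring
    rw [tsum_congr hterm, tsum_mul_left, stepI ht2 ht2']
    ring
  calc ∑' k : ℕ, (Bint (k+1/4) (3/4) * (Bint (k+3/4) (1/4) * (1/2:ℝ)^k))
      = ∑' k : ℕ, ∫ t in Ioo (0:ℝ) 1, f k t := by rw [tsum_congr hval]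
    _ = ∫ t in Ioo (0:ℝ) 1, ∑' k : ℕ, f k t := hswap.symm
    _ = ∫ t in Ioo (0:ℝ) 1, Bint (1/4) (3/4)
          * (t^((1:ℝ)/4-1) * (1-t)^((3:ℝ)/4-1) * (1-t/2)^(-(3/4):ℝ)) :=
        setIntegral_congr_fun measurableSet_Ioo hpt
    _ = Bint (1/4) (3/4)
          * ∫ t in Ioo (0:ℝ) 1, t^((1:ℝ)/4-1) * (1-t)^((3:ℝ)/4-1) * (1-t/2)^(-(3/4):ℝ) :=
        integral_const_mul _ _

lemma sub1 : ∫ t in Ioo (0:ℝ) 1, t^((1:ℝ)/4-1) * (1-t)^((3:ℝ)/4-1) * (1-t/2)^(-(3/4):ℝ)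
    = ∫ u in Ioo (0:ℝ) 1, (2:ℝ)^((3:ℝ)/4) * (u^((3:ℝ)/4-1) * (1-u^2)^((1:ℝ)/4-1)) := by
  have himg : (fun u : ℝ => 1-u) '' (Ioo (0:ℝ) 1) = Ioo (0:ℝ) 1 := by
    ext v
    constructor
    · rintro ⟨u, hu, rfl⟩
      dsimp only
      exact ⟨by linarith [hu.2], by linarith [hu.1]⟩
    · intro hv; exact ⟨1-v, ⟨by linarith [hv.2], by linarith [hv.1]⟩, by ring⟩
  have hder : ∀ u ∈ Ioo (0:ℝ) 1,
      HasDerivWithinAt (fun u : ℝ => 1-u) (-1) (Ioo (0:ℝ) 1) u := by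
    intro u hu
    exact (by simpa using (hasDerivAt_id u).const_sub 1 :
      HasDerivAt (fun u : ℝ => 1-u) (-1) u).hasDerivWithinAt
  have hinj : InjOn (fun u : ℝ => 1-u) (Ioo (0:ℝ) 1) := fun a _ b _ h => by
    simpa using h
  have key := integral_image_eq_integral_abs_deriv_smul measurableSet_Ioo hder hinj
    (fun t => t^((1:ℝ)/4-1) * (1-t)^((3:ℝ)/4-1) * (1-t/2)^(-(3/4):ℝ))
  rw [himg] at key
  rw [key]
  refine setIntegral_congr_fun measurableSet_Ioo (fun u hu => ?_)
  obtain ⟨hu0, hu1⟩ := hu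
  have hu1' : (0:ℝ) < 1-u := by linarith
  have hu2 : (0:ℝ) < 1+u := by linarith
  simp only [smul_eq_mul]
  rw [abs_of_neg (by norm_num : (-1:ℝ) < 0), neg_neg, one_mul]
  rw [show (1:ℝ)-(1-u) = u by ring, show (1:ℝ)-(1-u)/2 = (1+u)/2 by ring]
  rw [Real.div_rpow hu2.le (by norm_num : (0:ℝ) ≤ 2)]
  rw [show (1:ℝ)-u^2 = (1-u)*(1+u) by ring, Real.mul_rpow hu1'.le hu2.le]
  rw [show (-(3/4):ℝ) = (1:ℝ)/4-1 by norm_num]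
  rw [div_eq_mul_inv ((1+u)^((1:ℝ)/4-1)) ((2:ℝ)^((1:ℝ)/4-1))]
  have hD : ((2:ℝ)^((1:ℝ)/4-1))⁻¹ = (2:ℝ)^((3:ℝ)/4) := by
    rw [← Real.rpow_neg (by norm_num : (0:ℝ) ≤ 2),
      show (-((1:ℝ)/4-1)) = (3:ℝ)/4 by norm_num]
  rw [hD]
  ring

lemma sub2 : Bint (3/8) (1/4) = 2 * ∫ u in Ioo (0:ℝ) 1, u^((3:ℝ)/4-1) * (1-u^2)^((1:ℝ)/4-1) := by
  have himg : (fun u : ℝ => u^2) '' (Ioo (0:ℝ) 1) = Ioo (0:ℝ) 1 := by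
    ext v
    constructor
    · rintro ⟨u, hu, rfl⟩
      dsimp only
      exact ⟨pow_pos hu.1 2, by nlinarith [hu.1, hu.2]⟩
    · intro hv
      refine ⟨Real.sqrt v, ⟨Real.sqrt_pos.2 hv.1, ?_⟩, Real.sq_sqrt hv.1.le⟩
      rw [show (1:ℝ) = Real.sqrt 1 by simp]
      exact Real.sqrt_lt_sqrt hv.1.le hv.2
  have hder : ∀ u ∈ Ioo (0:ℝ) 1,
      HasDerivWithinAt (fun u : ℝ => u^2) (2*u) (Ioo (0:ℝ) 1) u := by
    intro u hu
    have := hasDerivAt_pow 2 u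
    norm_num at this
    exact this.hasDerivWithinAt
  have hinj : InjOn (fun u : ℝ => u^2) (Ioo (0:ℝ) 1) := by
    intro a ha b hb h
    simp only at h
    have h' : (a-b)*(a+b) = 0 := by linear_combination h
    rcases mul_eq_zero.mp h' with h1 | h2
    · linarith
    · linarith [ha.1, hb.1]
  have key := integral_image_eq_integral_abs_deriv_smul measurableSet_Ioo hder hinj
    (fun v => v^((3:ℝ)/8-1) * (1-v)^((1:ℝ)/4-1))
  rw [himg] at key
  have hBint : Bint (3/8) (1/4)
      = ∫ v in Ioo (0:ℝ) 1, v^((3:ℝ)/8-1) * (1-v)^((1:ℝ)/4-1) := by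
    simp only [Bint]
  rw [hBint, key, ← integral_const_mul]
  refine setIntegral_congr_fun measurableSet_Ioo (fun u hu => ?_)
  obtain ⟨hu0, hu1⟩ := hu
  simp only [smul_eq_mul]
  rw [abs_of_pos (by linarith : (0:ℝ) < 2*u)]
  rw [← Real.rpow_natCast u 2, ← Real.rpow_mul hu0.le]
  have hmul : u * u^(((2:ℕ):ℝ)*((3:ℝ)/8-1)) = u^((3:ℝ)/4-1) := by
    nth_rewrite 1 [← Real.rpow_one u]
    rw [← Real.rpow_add hu0]
    congr 1
    push_cast
    ring
  calc 2*u * (u^(((2:ℕ):ℝ)*((3:ℝ)/8-1)) * (1-u^(((2:ℕ)):ℝ))^((1:ℝ)/4-1))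
      = 2 * ((u * u^(((2:ℕ):ℝ)*((3:ℝ)/8-1))) * (1-u^(((2:ℕ)):ℝ))^((1:ℝ)/4-1)) := by ring
    _ = 2 * (u^((3:ℝ)/4-1) * (1-u^(((2:ℕ)):ℝ))^((1:ℝ)/4-1)) := by rw [hmul]

lemma hC0_val : C0 = Real.sqrt 2 * Real.pi := by
  have h := Real.Gamma_mul_Gamma_one_sub (1/4)
  norm_num at h
  rw [show Real.pi * (1/4) = Real.pi/4 by ring, Real.sin_pi_div_four] at h
  have h2 : Real.sqrt 2 * Real.sqrt 2 = 2 := Real.mul_self_sqrt (by norm_num)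
  have hs2 : (0:ℝ) < Real.sqrt 2 := Real.sqrt_pos.2 (by norm_num)
  rw [C0, h, eq_comm, eq_div_iff (by positivity)]
  linear_combination (Real.pi/2) * h2

lemma final_const : C0 * ((2:ℝ)^((3:ℝ)/4) * (Bint (3/8) (1/4) / 2)) / C0^2
    = Real.sqrt Real.pi / (Real.Gamma (5/8) * Real.Gamma (7/8)) := by
  have hG58 := Real.Gamma_pos_of_pos (show (0:ℝ) < 5/8 by norm_num)
  have hG78 := Real.Gamma_pos_of_pos (show (0:ℝ) < 7/8 by norm_num)
  have hG14 := Real.Gamma_pos_of_pos (show (0:ℝ) < 1/4 by norm_num)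
  have hG34 := Real.Gamma_pos_of_pos (show (0:ℝ) < 3/4 by norm_num)
  have hG38 := Real.Gamma_pos_of_pos (show (0:ℝ) < 3/8 by norm_num)
  have hπ := Real.pi_pos
  have h2 : Real.sqrt 2 * Real.sqrt 2 = 2 := Real.mul_self_sqrt (by norm_num)
  have hs2 : (0:ℝ) < Real.sqrt 2 := Real.sqrt_pos.2 (by norm_num)
  have hsπ : (0:ℝ) < Real.sqrt Real.pi := Real.sqrt_pos.2 hπ
  have hπ2 : Real.sqrt Real.pi * Real.sqrt Real.pi = Real.pi := Real.mul_self_sqrt hπ.le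
  have hdup := Real.Gamma_mul_Gamma_add_half (3/8)
  norm_num at hdup
  have hpow : (2:ℝ)^((3:ℝ)/4) * (2:ℝ)^((1:ℝ)/4) = 2 := by
    rw [← Real.rpow_add (by norm_num : (0:ℝ) < 2),
      show (3:ℝ)/4 + 1/4 = 1 by norm_num, Real.rpow_one]
  have hpow2 : (0:ℝ) < (2:ℝ)^((3:ℝ)/4) := Real.rpow_pos_of_pos (by norm_num) _
  have hB38 : Bint (3/8) (1/4) = Real.Gamma (3/8) * Real.Gamma (1/4) / Real.Gamma (5/8) := by
    rw [beta_eq (by norm_num) (by norm_num), show (3:ℝ)/8+1/4 = 5/8 by norm_num]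
  have hrefl : Real.Gamma (1/4) * Real.Gamma (3/4) = Real.sqrt 2 * Real.pi := by
    rw [← hC0_val]; rfl
  rw [hB38, hC0_val, div_eq_div_iff (by positivity) (by positivity)]
  field_simp
  linear_combination (Real.Gamma (1/4) * (2:ℝ)^((3:ℝ)/4)) * hdup
    + (Real.Gamma (1/4) * Real.Gamma (3/4) * Real.sqrt Real.pi) * hpow
    + (2 * Real.sqrt Real.pi) * hrefl

lemma stepIII : ∫ t in Ioo (0:ℝ) 1, t^((1:ℝ)/4-1) * (1-t)^((3:ℝ)/4-1) * (1-t/2)^(-(3/4):ℝ)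
    = (2:ℝ)^((3:ℝ)/4) * (Bint (3/8) (1/4) / 2) := by
  rw [sub1, integral_const_mul]
  have h := sub2
  rw [show (∫ u in Ioo (0:ℝ) 1, u^((3:ℝ)/4-1) * (1-u^2)^((1:ℝ)/4-1))
    = Bint (3/8) (1/4)/2 by linarith]

lemma summable_gk : Summable gk :=
  (summable_prod.div_const (C0^2)).congr (fun k => (gk_eq k).symm)

lemma tsum_gk_val : ∑' k : ℕ, gk k
    = Real.sqrt Real.pi / (Real.Gamma (5/8) * Real.Gamma (7/8)) := by
  have h1 : ∑' k : ℕ, gk k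
      = (∑' k : ℕ, Bint (k+1/4) (3/4) * (Bint (k+3/4) (1/4) * (1/2:ℝ)^k)) / C0^2 := by
    rw [← tsum_div_const]
    exact tsum_congr fun k => gk_eq k
  have hB14 : Bint (1/4) (3/4) = C0 := by
    rw [beta_eq (by norm_num) (by norm_num), show (1:ℝ)/4+3/4 = 1 by norm_num,
      Real.Gamma_one, div_one, C0]
  rw [h1, stepII, stepIII, hB14, final_const]

/-- The explicit tile counting function
`f(n) = ∑_{k=0}^n C(4k,k)·C(3k,k)·128^{n-k}` satisfies
`f(n) ∼ (√π / (Γ(5/8)·Γ(7/8)))·128^n`. -/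
theorem tileCounting_gamma_asymptotics :
    Filter.Tendsto
      (fun n : ℕ =>
        ((∑ k ∈ Finset.range (n + 1),
            Nat.choose (4 * k) k * Nat.choose (3 * k) k * 128 ^ (n - k) : ℕ) : ℝ) /
          128 ^ n)
      Filter.atTop
      (nhds (Real.sqrt Real.pi / (Real.Gamma (5 / 8) * Real.Gamma (7 / 8)))) := by
  have hsum : HasSum gk (Real.sqrt Real.pi / (Real.Gamma (5/8) * Real.Gamma (7/8))) :=
    tsum_gk_val ▸ summable_gk.hasSum
  have h2 : Tendsto (fun n : ℕ => ∑ k ∈ Finset.range (n+1), gk k) atTop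
      (nhds (Real.sqrt Real.pi / (Real.Gamma (5/8) * Real.Gamma (7/8)))) :=
    hsum.tendsto_sum_nat.comp (tendsto_add_atTop_nat 1)
  refine h2.congr (fun n => ?_)
  rw [Nat.cast_sum, Finset.sum_div]
  refine Finset.sum_congr rfl (fun k hk => ?_)
  have hk' : k ≤ n := Nat.lt_succ_iff.mp (Finset.mem_range.mp hk)
  rw [gk]
  push_cast
  rw [div_eq_div_iff (by positivity) (by positivity),
    mul_assoc ((((4*k).choose k : ℕ) : ℝ) * (((3*k).choose k : ℕ) : ℝ)) ((128:ℝ)^(n-k))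
      ((128:ℝ)^k),
    ← pow_add, Nat.sub_add_cancel hk']
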